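/- arXiv:1904.09490 — 2 statements merged into one kernel-verified Lean document; each statement's English description precedes it below -/
import Mathlib

section
/- The centralizer of an irrational rotation R_α in the group Homeo_+(S^1) consists exactly of the rotations: if g ∈ Homeo_+(S^1) commutes with R_α where α is irrational, then g is a rotation R_β for some β. In particular this centralizer is abelian. -/
open Filter Topology

/-- An orientation-preserving homeomorphism of the circle `S¹ = ℝ/ℤ`: one admitting a
strictly monotone increasing lift `F : ℝ → ℝ` commuting with the unit translation. -/
def IsOrientationPreserving (g : (AddCircle (1:ℝ)) ≃ₜ (AddCircle (1:ℝ))) : Prop :=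
  ∃ F : ℝ → ℝ, StrictMono F ∧ (∀ x, F (x + 1) = F x + 1) ∧
    ∀ x : ℝ, g (x : AddCircle (1:ℝ)) = ((F x : ℝ) : AddCircle (1:ℝ))

/-- The subgroup of `ℝ` generated by an irrational `α` and `1` is dense. -/
lemma dense_closure_irrational (α : ℝ) (hα : Irrational α) :
    Dense ((AddSubgroup.closure {α, 1} : AddSubgroup ℝ) : Set ℝ) := by
  rcases (AddSubgroup.closure {α, 1}).dense_or_cyclic with hd | ⟨a, ha⟩
  · exact hd
  · exfalso
    have hαmem : α ∈ AddSubgroup.closure ({α, 1} : Set ℝ) :=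
      AddSubgroup.subset_closure (by simp)
    have h1mem : (1 : ℝ) ∈ AddSubgroup.closure ({α, 1} : Set ℝ) :=
      AddSubgroup.subset_closure (by simp)
    rw [ha, AddSubgroup.mem_closure_singleton] at hαmem h1mem
    obtain ⟨m, hm⟩ := hαmem
    obtain ⟨n, hn⟩ := h1mem
    have hn0 : (n : ℝ) ≠ 0 := by
      intro h
      rw [zsmul_eq_mul, h, zero_mul] at hn
      exact one_ne_zero hn.symm
    have : α = (m : ℝ) / (n : ℝ) := by
      have han : a = 1 / (n : ℝ) := by
        field_simp
        rw [← hn, zsmul_eq_mul]; ring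
      rw [← hm, han, zsmul_eq_mul]; ring
    exact hα ⟨(m : ℚ) / (n : ℚ), by push_cast [this]; ring⟩

/-- A continuous self-map of the circle invariant under an irrational rotation is constant. -/
lemma const_of_invariant (α : ℝ) (hα : Irrational α)
    (f : AddCircle (1:ℝ) → AddCircle (1:ℝ)) (hf : Continuous f)
    (hper : ∀ x : AddCircle (1:ℝ), f (x + (α : AddCircle (1:ℝ))) = f x) :
    ∀ x : AddCircle (1:ℝ), f x = f 0 := by
  set C : Set ℝ := {t : ℝ | ∀ y : AddCircle (1:ℝ), f (y + (t : AddCircle (1:ℝ))) = f y} with hC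
  have hclosed : IsClosed C := by
    have : C = ⋂ y : AddCircle (1:ℝ),
        {t : ℝ | f (y + (t : AddCircle (1:ℝ))) = f y} := by
      ext t; simp [hC, Set.mem_iInter]
    rw [this]
    refine isClosed_iInter fun y => isClosed_eq ?_ continuous_const
    exact hf.comp (continuous_const.add (AddCircle.continuous_mk' (1:ℝ)))
  have hsub : ((AddSubgroup.closure {α, 1} : AddSubgroup ℝ) : Set ℝ) ⊆ C := by
    intro t ht
    refine AddSubgroup.closure_induction ?_ ?_ ?_ ?_ ht
    · intro x hx
      rcases hx with hx | hx
      · subst hx; intro y; exact hper y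
      · subst hx; intro y
        have : ((1 : ℝ) : AddCircle (1:ℝ)) = 0 := by
          simpa using (AddCircle.coe_period (p := (1:ℝ)))
        rw [this, add_zero]
    · intro y; simp
    · intro a b _ _ ha hb y
      rw [show ((a + b : ℝ) : AddCircle (1:ℝ)) = (a : AddCircle (1:ℝ)) + (b : AddCircle (1:ℝ))
        from rfl, ← add_assoc, hb, ha]
    · intro a _ ha y
      have key := ha (y + ((-a : ℝ) : AddCircle (1:ℝ)))
      have : (((-a) : ℝ) : AddCircle (1:ℝ)) + ((a : ℝ) : AddCircle (1:ℝ)) = 0 := by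
        push_cast; simp
      rw [add_assoc, this, add_zero] at key
      exact key.symm
  have hCuniv : C = Set.univ := by
    have hd := (dense_closure_irrational α hα).mono hsub
    exact Set.eq_univ_of_forall fun t => hclosed.closure_eq ▸ hd t
  intro x
  obtain ⟨t, rfl⟩ : ∃ t : ℝ, (t : AddCircle (1:ℝ)) = x := Quotient.exists_rep x
  have ht : t ∈ C := hCuniv ▸ Set.mem_univ t
  simpa using ht 0

/-- Any homeomorphism of the circle commuting with an irrational rotation is a rotation. -/
lemma is_rotation (α : ℝ) (hα : Irrational α)
    (g : (AddCircle (1:ℝ)) ≃ₜ (AddCircle (1:ℝ)))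
    (hgc : ∀ x : AddCircle (1:ℝ), g (x + (α : AddCircle (1:ℝ))) = g x + (α : AddCircle (1:ℝ))) :
    ∀ x : AddCircle (1:ℝ), g x = x + g 0 := by
  have hconst := const_of_invariant α hα (fun x => g x - x)
    (g.continuous.sub continuous_id)
    (fun x => by simp only [hgc x]; abel)
  intro x
  have := hconst x
  simp only [sub_zero] at this
  have : g x - x = g 0 := this
  linear_combination (norm := abel) this

/-- The centralizer of an irrational rotation `R_α` in `Homeo₊(S¹)` consists exactly of
rotations; in particular it is abelian. -/
theorem stmt1 (α : ℝ) (hα : Irrational α)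
    (g : (AddCircle (1:ℝ)) ≃ₜ (AddCircle (1:ℝ)))
    (hg : IsOrientationPreserving g)
    (hgc : ∀ x : AddCircle (1:ℝ), g (x + (α : AddCircle (1:ℝ))) = g x + (α : AddCircle (1:ℝ))) :
    (∃ β : ℝ, ∀ x : AddCircle (1:ℝ), g x = x + (β : AddCircle (1:ℝ))) ∧
    (∀ h : (AddCircle (1:ℝ)) ≃ₜ (AddCircle (1:ℝ)), IsOrientationPreserving h →
      (∀ x : AddCircle (1:ℝ), h (x + (α : AddCircle (1:ℝ))) = h x + (α : AddCircle (1:ℝ))) →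
      ∀ x : AddCircle (1:ℝ), g (h x) = h (g x)) := by
  have hgrot := is_rotation α hα g hgc
  constructor
  · obtain ⟨β, hβ⟩ : ∃ β : ℝ, (β : AddCircle (1:ℝ)) = g 0 := Quotient.exists_rep (g 0)
    exact ⟨β, fun x => by rw [hgrot x, hβ]⟩
  · intro h _ hhc x
    have hhrot := is_rotation α hα h hhc
    rw [hhrot x, hgrot (x + h 0), hgrot x, hhrot (x + g 0)]
    abel
end

section
/- Let A be an open annulus and let M₁, M₂ ⊂ A be two disjoint separators. Then either M₁ ⊂ A_L(M₂) or M₁ ⊂ A_R(M₂). Moreover, if M₁ ⊂ A_L(M₂) then M₂ ⊂ A_R(M₁). -/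
open Filter Topology

/-- The open annulus `A = S¹ × ℝ` (with `S¹ = ℝ/ℤ`). -/
abbrev Ann : Type := AddCircle (1:ℝ) × ℝ

/-- A subset of the annulus is separating if every arc connecting the two ends meets it. -/
def Separating (X : Set Ann) : Prop :=
  ∀ γ : ℝ → Ann, Continuous γ →
    Tendsto (fun t => (γ t).2) atTop atTop →
    Tendsto (fun t => (γ t).2) atBot atBot →
    ∃ t, γ t ∈ X

/-- A separator: compact, connected, separating. -/
def IsSeparator (M : Set Ann) : Prop :=
  IsCompact M ∧ IsConnected M ∧ Separating M

/-- `A_L(M)`: the set of points of `A − M` that can be joined to the left end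
(`y → −∞`) by a path avoiding `M`. -/
def leftRegion (M : Set Ann) : Set Ann :=
  {p | p ∉ M ∧ ∃ γ : ℝ → Ann, Continuous γ ∧ γ 0 = p ∧ (∀ t, γ t ∉ M) ∧
    Tendsto (fun t => (γ t).2) atTop atBot}

/-- `A_R(M)`: the set of points of `A − M` that can be joined to the right end
(`y → +∞`) by a path avoiding `M`. -/
def rightRegion (M : Set Ann) : Set Ann :=
  {p | p ∉ M ∧ ∃ γ : ℝ → Ann, Continuous γ ∧ γ 0 = p ∧ (∀ t, γ t ∉ M) ∧
    Tendsto (fun t => (γ t).2) atTop atTop}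

/-! ### Auxiliary development -/

/-- A generalized region: points joinable to `l`-behaviour of the second coordinate
by a path avoiding `M`. -/
def genRegion (l : Filter ℝ) (M : Set Ann) : Set Ann :=
  {p | p ∉ M ∧ ∃ γ : ℝ → Ann, Continuous γ ∧ γ 0 = p ∧ (∀ t, γ t ∉ M) ∧
    Tendsto (fun t => (γ t).2) atTop l}

lemma leftRegion_eq (M : Set Ann) : leftRegion M = genRegion atBot M := rfl

lemma rightRegion_eq (M : Set Ann) : rightRegion M = genRegion atTop M := rfl

/-- Prepending a finite path to an escaping path. -/
lemma genRegion_of_path {l : Filter ℝ} {M : Set Ann} {q r : Ann}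
    (hr : r ∈ genRegion l M) (σ : ℝ → Ann) (hσc : Continuous σ)
    (hσ0 : σ 0 = q) (hσ1 : σ 1 = r) (hσM : ∀ t, σ t ∉ M) :
    q ∈ genRegion l M := by
  obtain ⟨hrM, γ, hγc, hγ0, hγM, hγl⟩ := hr
  refine ⟨hσ0 ▸ hσM 0, fun t => if t ≤ 1 then σ t else γ (t - 1), ?_, ?_, ?_, ?_⟩
  · refine Continuous.if_le hσc (hγc.comp (continuous_id.sub continuous_const))
      continuous_id continuous_const (fun t ht => ?_)
    subst ht; simp [hσ1, hγ0]
  · simpa using hσ0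
  · intro t
    by_cases ht : t ≤ 1
    · simpa [ht] using hσM t
    · simpa [ht] using hγM (t - 1)
  · have h1 : Tendsto (fun t : ℝ => (γ (t - 1)).2) atTop l := by
      have : Tendsto (fun t : ℝ => t - 1) atTop atTop :=
        tendsto_atTop_add_const_right atTop (-1) tendsto_id
      exact hγl.comp this
    refine h1.congr' ?_
    filter_upwards [eventually_gt_atTop (1 : ℝ)] with t ht
    simp [not_le.mpr ht]

/-- Upward ray: if the closed upward vertical ray from `p` avoids `M`,
then `p` is in the right region. -/
lemma mem_genRegion_ray_up {M : Set Ann} {p : Ann}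
    (h : ∀ y, p.2 ≤ y → (p.1, y) ∉ M) : p ∈ genRegion atTop M := by
  refine ⟨by simpa using h p.2 le_rfl, fun t => (p.1, p.2 + max t 0), ?_, ?_, ?_, ?_⟩
  · exact continuous_const.prodMk (continuous_const.add (continuous_id.max continuous_const))
  · simp
  · intro t; exact h _ (by simp [le_add_of_nonneg_right, le_max_right])
  · refine tendsto_atTop_add_const_left atTop p.2 ?_
    exact tendsto_atTop_mono (fun t => le_max_left t 0) tendsto_id

/-- Downward ray: if the closed downward vertical ray from `p` avoids `M`,
then `p` is in the left region. -/
lemma mem_genRegion_ray_down {M : Set Ann} {p : Ann}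
    (h : ∀ y, y ≤ p.2 → (p.1, y) ∉ M) : p ∈ genRegion atBot M := by
  refine ⟨by simpa using h p.2 le_rfl, fun t => (p.1, p.2 - max t 0), ?_, ?_, ?_, ?_⟩
  · exact continuous_const.prodMk (continuous_const.sub (continuous_id.max continuous_const))
  · simp
  · intro t; exact h _ (by simp [le_max_right])
  · have hmax : Tendsto (fun t : ℝ => max t 0) atTop atTop :=
      tendsto_atTop_mono (fun t => le_max_left t 0) tendsto_id
    have h : Tendsto (fun t : ℝ => p.2 - max t 0) atTop atBot := by
      simpa [sub_eq_add_neg] using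
        tendsto_atBot_add_const_left atTop p.2 (tendsto_neg_atTop_atBot.comp hmax)
    exact h

/-- The left and right regions of a separating set are disjoint. -/
lemma genRegion_disjoint {M : Set Ann} (hM : Separating M) {p : Ann}
    (hL : p ∈ genRegion atBot M) (hR : p ∈ genRegion atTop M) : False := by
  obtain ⟨-, γ₁, hγ₁c, hγ₁0, hγ₁M, hγ₁l⟩ := hL
  obtain ⟨-, γ₂, hγ₂c, hγ₂0, hγ₂M, hγ₂l⟩ := hR
  set δ : ℝ → Ann := fun t => if t ≤ 0 then γ₁ (-t) else γ₂ t with hδ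
  have hδc : Continuous δ := by
    refine Continuous.if_le (hγ₁c.comp continuous_neg) hγ₂c
      continuous_id continuous_const (fun t ht => ?_)
    subst ht; simp [hγ₁0, hγ₂0]
  have hδT : Tendsto (fun t => (δ t).2) atTop atTop := by
    refine hγ₂l.congr' ?_
    filter_upwards [eventually_gt_atTop (0 : ℝ)] with t ht
    simp [hδ, not_le.mpr ht]
  have hδB : Tendsto (fun t => (δ t).2) atBot atBot := by
    have h1 : Tendsto (fun t : ℝ => (γ₁ (-t)).2) atBot atBot :=
      hγ₁l.comp tendsto_neg_atBot_atTop
    refine h1.congr' ?_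
    filter_upwards [eventually_lt_atBot (0 : ℝ)] with t ht
    simp [hδ, le_of_lt ht]
  obtain ⟨t, htM⟩ := hM δ hδc hδT hδB
  by_cases ht : t ≤ 0
  · exact hγ₁M (-t) (by simpa [hδ, ht] using htM)
  · exact hγ₂M t (by simpa [hδ, ht] using htM)

/-- Around any point off a closed set `M` there is an open set avoiding `M`
within which any point is joined to the center by a path. -/
lemma exists_square {M : Set Ann} (hM : IsClosed M) {p : Ann} (hp : p ∉ M) :
    ∃ S : Set Ann, IsOpen S ∧ p ∈ S ∧ (∀ q ∈ S, q ∉ M) ∧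
      ∀ q ∈ S, ∃ σ : ℝ → Ann, Continuous σ ∧ σ 0 = q ∧ σ 1 = p ∧ ∀ t, σ t ∈ S := by
  set f : ℝ × ℝ → Ann := fun v => (p.1 + (v.1 : AddCircle (1:ℝ)), p.2 + v.2) with hf
  have hfc : Continuous f := by
    exact (continuous_const.add (AddCircle.continuous_mk' 1 |>.comp continuous_fst)).prodMk
      (continuous_const.add continuous_snd)
  have hfo : IsOpenMap f := by
    have hcoe : IsOpenMap ((↑) : ℝ → AddCircle (1:ℝ)) := QuotientAddGroup.isOpenMap_coe
    have h1 : IsOpenMap fun v : ℝ × ℝ => ((v.1 : AddCircle (1:ℝ)), v.2) :=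
      hcoe.prodMap IsOpenMap.id
    have h2 : IsOpenMap fun w : AddCircle (1:ℝ) × ℝ => (p.1 + w.1, p.2 + w.2) :=
      ((Homeomorph.addLeft p.1).prodCongr (Homeomorph.addLeft p.2)).isOpenMap
    exact h2.comp h1
  have hf0 : f 0 = p := by simp [hf]
  have hpre : IsOpen (f ⁻¹' Mᶜ) := hM.isOpen_compl.preimage hfc
  have h0 : (0 : ℝ × ℝ) ∈ f ⁻¹' Mᶜ := by simp [hf0, hp]
  obtain ⟨δ, hδpos, hball⟩ := Metric.isOpen_iff.mp hpre 0 h0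
  refine ⟨f '' Metric.ball 0 δ, hfo _ Metric.isOpen_ball, ⟨0, by simpa using hδpos, hf0⟩,
    ?_, ?_⟩
  · rintro q ⟨v, hv, rfl⟩
    exact hball hv
  · rintro q ⟨v, hv, rfl⟩
    refine ⟨fun t => f ((1 - max 0 (min t 1)) • v), ?_, ?_, ?_, ?_⟩
    · exact hfc.comp (((continuous_const.sub
        (continuous_const.max (continuous_id.min continuous_const))).smul continuous_const))
    · norm_num
    · norm_num [hf0]
    · intro t
      refine ⟨(1 - max 0 (min t 1)) • v, ?_, rfl⟩
      rw [mem_ball_zero_iff] at hv ⊢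
      calc ‖(1 - max 0 (min t 1)) • v‖ = ‖1 - max 0 (min t 1)‖ * ‖v‖ := norm_smul _ _
        _ ≤ 1 * ‖v‖ := by
            refine mul_le_mul_of_nonneg_right ?_ (norm_nonneg v)
            have h01 : (0:ℝ) ≤ max 0 (min t 1) := le_max_left _ _
            have h11 : max 0 (min t 1) ≤ 1 := max_le (by norm_num) (min_le_right t 1)
            rw [Real.norm_eq_abs, abs_le]
            constructor <;> linarith
        _ < δ := by simpa using hv

/-- Membership in a generalized region is locally constant off `M`. -/
lemma genRegion_mem_congr {l : Filter ℝ} {M : Set Ann} (hM : IsClosed M) {p : Ann}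
    (hp : p ∉ M) :
    ∃ S : Set Ann, IsOpen S ∧ p ∈ S ∧
      ∀ q ∈ S, (q ∈ genRegion l M ↔ p ∈ genRegion l M) := by
  obtain ⟨S, hSo, hpS, hSM, hSpath⟩ := exists_square hM hp
  refine ⟨S, hSo, hpS, fun q hq => ?_⟩
  obtain ⟨σ, hσc, hσ0, hσ1, hσS⟩ := hSpath q hq
  constructor
  · intro hqmem
    -- path from p to q: reverse of σ
    refine genRegion_of_path hqmem (fun t => σ (1 - t)) (hσc.comp (continuous_const.sub continuous_id)) ?_ ?_ (fun t => hSM _ (hσS _))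
    · simpa using hσ1
    · simpa using hσ0
  · intro hpmem
    exact genRegion_of_path hpmem σ hσc hσ0 hσ1 (fun t => hSM _ (hσS _))

/-- A connected set disjoint from `M` that meets a generalized region is contained in it. -/
lemma subset_genRegion {l : Filter ℝ} {M C : Set Ann} (hM : IsClosed M)
    (hC : IsPreconnected C) (hdisj : ∀ p ∈ C, p ∉ M)
    (hne : ∃ p ∈ C, p ∈ genRegion l M) : C ⊆ genRegion l M := by
  set U : Set Ann := genRegion l M with hU
  set V : Set Ann := {p | p ∉ M ∧ p ∉ U} with hV
  have hUo : IsOpen U := by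
    rw [isOpen_iff_forall_mem_open]
    intro p hp
    obtain ⟨S, hSo, hpS, hcong⟩ := genRegion_mem_congr (l := l) hM hp.1
    exact ⟨S, fun q hq => (hcong q hq).mpr hp, hSo, hpS⟩
  have hVo : IsOpen V := by
    rw [isOpen_iff_forall_mem_open]
    intro p hp
    obtain ⟨S, hSo, hpS, hSM, hSpath⟩ := exists_square hM hp.1
    obtain ⟨S', hSo', hpS', hcong⟩ := genRegion_mem_congr (l := l) hM hp.1
    refine ⟨S ∩ S', fun q hq => ⟨hSM q hq.1, fun hqU => hp.2 ((hcong q hq.2).mp hqU)⟩,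
      hSo.inter hSo', hpS, hpS'⟩
  have hdisjUV : Disjoint U V := by
    rw [Set.disjoint_left]; intro p hpU hpV; exact hpV.2 hpU
  have hCUV : C ⊆ U ∪ V := by
    intro p hp
    by_cases h : p ∈ U
    · exact Or.inl h
    · exact Or.inr ⟨hdisj p hp, h⟩
  rcases hC.subset_or_subset hUo hVo hdisjUV hCUV with h | h
  · exact h
  · obtain ⟨p, hpC, hpU⟩ := hne
    exact absurd hpU (h hpC).2

/-- The trace of a compact set on a vertical line is compact. -/
lemma line_trace_compact {M : Set Ann} (hM : IsCompact M) (x : AddCircle (1:ℝ)) :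
    IsCompact {t : ℝ | ((x, t) : Ann) ∈ M} := by
  have hclosed : IsClosed {t : ℝ | ((x, t) : Ann) ∈ M} :=
    hM.isClosed.preimage (continuous_const.prodMk continuous_id)
  have himg : IsCompact (Prod.snd '' M) := hM.image continuous_snd
  obtain ⟨a, ha⟩ := himg.bddBelow
  obtain ⟨b, hb⟩ := himg.bddAbove
  refine IsCompact.of_isClosed_subset (isCompact_Icc (a := a) (b := b)) hclosed ?_
  intro t ht
  exact ⟨ha ⟨(x, t), ht, rfl⟩, hb ⟨(x, t), ht, rfl⟩⟩

/-- A separating set meets every vertical line. -/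
lemma line_trace_nonempty {M : Set Ann} (hM : Separating M) (x : AddCircle (1:ℝ)) :
    {t : ℝ | ((x, t) : Ann) ∈ M}.Nonempty := by
  obtain ⟨t, ht⟩ := hM (fun t => (x, t))
    (continuous_const.prodMk continuous_id) tendsto_id tendsto_id
  exact ⟨t, ht⟩

/-- Ordering of disjoint separators: if `M₁, M₂` are disjoint separators then either
`M₁ ⊂ A_L(M₂)` or `M₁ ⊂ A_R(M₂)`; moreover `M₁ ⊂ A_L(M₂)` implies `M₂ ⊂ A_R(M₁)`. -/
theorem stmt5 (M₁ M₂ : Set Ann) (h1 : IsSeparator M₁) (h2 : IsSeparator M₂)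
    (hd : Disjoint M₁ M₂) :
    (M₁ ⊆ leftRegion M₂ ∨ M₁ ⊆ rightRegion M₂) ∧
    (M₁ ⊆ leftRegion M₂ → M₂ ⊆ rightRegion M₁) := by
  obtain ⟨h1c, h1conn, h1s⟩ := h1
  obtain ⟨h2c, h2conn, h2s⟩ := h2
  have hd12 : ∀ p ∈ M₁, p ∉ M₂ := fun p hp hp2 => Set.disjoint_left.mp hd hp hp2
  have hd21 : ∀ p ∈ M₂, p ∉ M₁ := fun p hp hp1 => Set.disjoint_left.mp hd hp1 hp
  set x₀ : AddCircle (1:ℝ) := 0 with hx₀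
  set T₁ : Set ℝ := {t : ℝ | ((x₀, t) : Ann) ∈ M₁} with hT₁
  set T₂ : Set ℝ := {t : ℝ | ((x₀, t) : Ann) ∈ M₂} with hT₂
  obtain ⟨b₁, hb₁T, hb₁max⟩ := (line_trace_compact h1c x₀).exists_isGreatest
    (line_trace_nonempty h1s x₀)
  obtain ⟨b₂, hb₂T, hb₂max⟩ := (line_trace_compact h2c x₀).exists_isGreatest
    (line_trace_nonempty h2s x₀)
  obtain ⟨a₁, ha₁T, ha₁min⟩ := (line_trace_compact h1c x₀).exists_isLeast
    (line_trace_nonempty h1s x₀)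
  obtain ⟨a₂, ha₂T, ha₂min⟩ := (line_trace_compact h2c x₀).exists_isLeast
    (line_trace_nonempty h2s x₀)
  rw [leftRegion_eq, rightRegion_eq, rightRegion_eq]
  rcases lt_trichotomy b₁ b₂ with hb | hb | hb
  · -- top of M₂ is above top of M₁ : M₂ ⊆ rightRegion M₁
    have hq2 : ((x₀, b₂) : Ann) ∈ genRegion atTop M₁ := by
      refine mem_genRegion_ray_up (fun y hy hyM => ?_)
      have : y ≤ b₁ := hb₁max hyM
      simp only at hy
      linarith
    have hM2R1 : M₂ ⊆ genRegion atTop M₁ :=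
      subset_genRegion h1c.isClosed h2conn.isPreconnected hd21 ⟨_, hb₂T, hq2⟩
    refine ⟨?_, fun _ => hM2R1⟩
    -- now the bottoms decide the first conjunct
    rcases lt_trichotomy a₁ a₂ with ha | ha | ha
    · -- bottom of M₁ is below bottom of M₂ : M₁ ⊆ leftRegion M₂
      have hq1 : ((x₀, a₁) : Ann) ∈ genRegion atBot M₂ := by
        refine mem_genRegion_ray_down (fun y hy hyM => ?_)
        have : a₂ ≤ y := ha₂min hyM
        simp only at hy
        linarith
      exact Or.inl (subset_genRegion h2c.isClosed h1conn.isPreconnected hd12 ⟨_, ha₁T, hq1⟩)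
    · exact absurd (show ((x₀, a₁) : Ann) ∈ M₂ by rw [ha]; exact ha₂T) (hd12 _ ha₁T)
    · -- bottom of M₂ below bottom of M₁ : M₂ ⊆ leftRegion M₁, contradiction
      have hq2' : ((x₀, a₂) : Ann) ∈ genRegion atBot M₁ := by
        refine mem_genRegion_ray_down (fun y hy hyM => ?_)
        have : a₁ ≤ y := ha₁min hyM
        simp only at hy
        linarith
      have hM2L1 : M₂ ⊆ genRegion atBot M₁ :=
        subset_genRegion h1c.isClosed h2conn.isPreconnected hd21 ⟨_, ha₂T, hq2'⟩
      exact (genRegion_disjoint h1s (hM2L1 hb₂T) (hM2R1 hb₂T)).elim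
  · exact absurd (show ((x₀, b₁) : Ann) ∈ M₂ by rw [hb]; exact hb₂T) (hd12 _ hb₁T)
  · -- top of M₁ above top of M₂ : M₁ ⊆ rightRegion M₂
    have hq1 : ((x₀, b₁) : Ann) ∈ genRegion atTop M₂ := by
      refine mem_genRegion_ray_up (fun y hy hyM => ?_)
      have : y ≤ b₂ := hb₂max hyM
      simp only at hy
      linarith
    have hM1R2 : M₁ ⊆ genRegion atTop M₂ :=
      subset_genRegion h2c.isClosed h1conn.isPreconnected hd12 ⟨_, hb₁T, hq1⟩
    refine ⟨Or.inr hM1R2, fun hL => ?_⟩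
    exact (genRegion_disjoint h2s (hL hb₁T) (hM1R2 hb₁T)).elim
end
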